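/- For finite convex subsets R ⊆ R' of Z², the perimeter of R is at most the perimeter of R', where convex means closed under taking horizontal and vertical segments between cells of the set, and R, R' are assumed connected (islands). More generally, if R' is an island and R is a finite convex set contained in R', the sum of the perimeters of the islands (connected components) of R is at most the perimeter of R'. -/

import Mathlib

/-- The four von Neumann neighbors of a cell of the plane. -/
def nbrsZ (p : ℤ × ℤ) : List (ℤ × ℤ) :=
  [(p.1 + 1, p.2), (p.1 - 1, p.2), (p.1, p.2 + 1), (p.1, p.2 - 1)]

/-- A set of cells is convex if it is closed under taking horizontal and vertical
segments between its cells. -/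
def IsConvexCells (R : Set (ℤ × ℤ)) : Prop :=
  (∀ a b j : ℤ, (a, j) ∈ R → (b, j) ∈ R → ∀ l, a ≤ l → l ≤ b → (l, j) ∈ R) ∧
  (∀ i a b : ℤ, (i, a) ∈ R → (i, b) ∈ R → ∀ l, a ≤ l → l ≤ b → (i, l) ∈ R)

/-- Two cells of a set are connected if they are joined by a path of adjacent cells
staying in the set. -/
def ConnIn (R : Set (ℤ × ℤ)) (p q : ℤ × ℤ) : Prop :=
  Relation.ReflTransGen (fun a b => a ∈ R ∧ b ∈ R ∧ b ∈ nbrsZ a) p q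

/-- A set is connected (for the von Neumann adjacency) if any two of its cells are
joined by a path inside it. -/
def IsConnCells (R : Set (ℤ × ℤ)) : Prop :=
  ∀ p ∈ R, ∀ q ∈ R, ConnIn R p q

/-- The perimeter of a finite set of cells: the number of pairs (x, y) with x in the
set, y outside it, and x, y adjacent. -/
def perim (R : Finset (ℤ × ℤ)) : ℕ :=
  ∑ x ∈ R, ((nbrsZ x).filter (fun y => y ∉ R)).length

lemma perim_eq (R : Finset (ℤ × ℤ)) : perim R =
    (R.filter (fun x => (x.1 + 1, x.2) ∉ R)).card +
    (R.filter (fun x => (x.1 - 1, x.2) ∉ R)).card +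
    (R.filter (fun x => (x.1, x.2 + 1) ∉ R)).card +
    (R.filter (fun x => (x.1, x.2 - 1) ∉ R)).card := by
  unfold perim
  have h : ∀ x : ℤ × ℤ, ((nbrsZ x).filter (fun y => y ∉ R)).length =
      (if (x.1 + 1, x.2) ∉ R then 1 else 0) +
      (if (x.1 - 1, x.2) ∉ R then 1 else 0) +
      (if (x.1, x.2 + 1) ∉ R then 1 else 0) +
      (if (x.1, x.2 - 1) ∉ R then 1 else 0) := by
    intro x
    simp only [nbrsZ, List.filter]
    by_cases h1 : (x.1 + 1, x.2) ∈ R <;> by_cases h2 : (x.1 - 1, x.2) ∈ R <;>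
      by_cases h3 : (x.1, x.2 + 1) ∈ R <;> by_cases h4 : (x.1, x.2 - 1) ∈ R <;>
      simp [h1, h2, h3, h4]
  simp only [h, Finset.sum_add_distrib, Finset.sum_ite_eq, Finset.sum_boole]
  simp [Finset.filter_not, Finset.card_filter]

lemma card_right (R : Finset (ℤ × ℤ))
    (hc : ∀ a b j : ℤ, (a, j) ∈ R → (b, j) ∈ R → ∀ l, a ≤ l → l ≤ b → (l, j) ∈ R) :
    (R.filter (fun x => (x.1 + 1, x.2) ∉ R)).card = (R.image Prod.snd).card := by
  apply Finset.card_nbij (i := Prod.snd)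
  · intro x hx
    rw [Finset.mem_coe, Finset.mem_filter] at hx
    exact Finset.mem_image_of_mem _ hx.1
  · rintro ⟨x1, x2⟩ hx ⟨y1, y2⟩ hy hxy
    rw [Finset.mem_coe, Finset.mem_filter] at hx hy
    dsimp only at hxy ⊢
    subst hxy
    obtain ⟨hxR, hx1⟩ := hx
    obtain ⟨hyR, hy1⟩ := hy
    dsimp only at hx1 hy1
    rcases lt_trichotomy x1 y1 with h | h | h
    · exact absurd (hc x1 y1 x2 hxR hyR (x1 + 1) (by omega) (by omega)) hx1
    · rw [h]
    · exact absurd (hc y1 x1 x2 hyR hxR (y1 + 1) (by omega) (by omega)) hy1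
  · intro j hj
    rw [Finset.mem_coe, Finset.mem_image] at hj
    obtain ⟨x, hxR, hxj⟩ := hj
    have hne : (R.filter (fun y => y.2 = j)).Nonempty :=
      ⟨x, Finset.mem_filter.2 ⟨hxR, hxj⟩⟩
    obtain ⟨m, hm, hmax⟩ := Finset.exists_max_image _ Prod.fst hne
    rw [Finset.mem_filter] at hm
    refine ⟨m, ?_, hm.2⟩
    rw [Finset.mem_coe, Finset.mem_filter]
    refine ⟨hm.1, fun hmem => ?_⟩
    have : m.1 + 1 ≤ m.1 := hmax (m.1 + 1, m.2) (Finset.mem_filter.2 ⟨hmem, hm.2⟩)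
    omega

lemma card_left (R : Finset (ℤ × ℤ))
    (hc : ∀ a b j : ℤ, (a, j) ∈ R → (b, j) ∈ R → ∀ l, a ≤ l → l ≤ b → (l, j) ∈ R) :
    (R.filter (fun x => (x.1 - 1, x.2) ∉ R)).card = (R.image Prod.snd).card := by
  apply Finset.card_nbij (i := Prod.snd)
  · intro x hx
    rw [Finset.mem_coe, Finset.mem_filter] at hx
    exact Finset.mem_image_of_mem _ hx.1
  · rintro ⟨x1, x2⟩ hx ⟨y1, y2⟩ hy hxy
    rw [Finset.mem_coe, Finset.mem_filter] at hx hy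
    dsimp only at hxy ⊢
    subst hxy
    obtain ⟨hxR, hx1⟩ := hx
    obtain ⟨hyR, hy1⟩ := hy
    dsimp only at hx1 hy1
    rcases lt_trichotomy x1 y1 with h | h | h
    · exact absurd (hc x1 y1 x2 hxR hyR (y1 - 1) (by omega) (by omega)) hy1
    · rw [h]
    · exact absurd (hc y1 x1 x2 hyR hxR (x1 - 1) (by omega) (by omega)) hx1
  · intro j hj
    rw [Finset.mem_coe, Finset.mem_image] at hj
    obtain ⟨x, hxR, hxj⟩ := hj
    have hne : (R.filter (fun y => y.2 = j)).Nonempty :=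
      ⟨x, Finset.mem_filter.2 ⟨hxR, hxj⟩⟩
    obtain ⟨m, hm, hmin⟩ := Finset.exists_min_image _ Prod.fst hne
    rw [Finset.mem_filter] at hm
    refine ⟨m, ?_, hm.2⟩
    rw [Finset.mem_coe, Finset.mem_filter]
    refine ⟨hm.1, fun hmem => ?_⟩
    have : m.1 ≤ m.1 - 1 := hmin (m.1 - 1, m.2) (Finset.mem_filter.2 ⟨hmem, hm.2⟩)
    omega

lemma card_up (R : Finset (ℤ × ℤ))
    (hc : ∀ i a b : ℤ, (i, a) ∈ R → (i, b) ∈ R → ∀ l, a ≤ l → l ≤ b → (i, l) ∈ R) :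
    (R.filter (fun x => (x.1, x.2 + 1) ∉ R)).card = (R.image Prod.fst).card := by
  apply Finset.card_nbij (i := Prod.fst)
  · intro x hx
    rw [Finset.mem_coe, Finset.mem_filter] at hx
    exact Finset.mem_image_of_mem _ hx.1
  · rintro ⟨x1, x2⟩ hx ⟨y1, y2⟩ hy hxy
    rw [Finset.mem_coe, Finset.mem_filter] at hx hy
    dsimp only at hxy ⊢
    subst hxy
    obtain ⟨hxR, hx1⟩ := hx
    obtain ⟨hyR, hy1⟩ := hy
    dsimp only at hx1 hy1
    rcases lt_trichotomy x2 y2 with h | h | h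
    · exact absurd (hc x1 x2 y2 hxR hyR (x2 + 1) (by omega) (by omega)) hx1
    · rw [h]
    · exact absurd (hc x1 y2 x2 hyR hxR (y2 + 1) (by omega) (by omega)) hy1
  · intro i hi
    rw [Finset.mem_coe, Finset.mem_image] at hi
    obtain ⟨x, hxR, hxi⟩ := hi
    have hne : (R.filter (fun y => y.1 = i)).Nonempty :=
      ⟨x, Finset.mem_filter.2 ⟨hxR, hxi⟩⟩
    obtain ⟨m, hm, hmax⟩ := Finset.exists_max_image _ Prod.snd hne
    rw [Finset.mem_filter] at hm
    refine ⟨m, ?_, hm.2⟩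
    rw [Finset.mem_coe, Finset.mem_filter]
    refine ⟨hm.1, fun hmem => ?_⟩
    have : m.2 + 1 ≤ m.2 := hmax (m.1, m.2 + 1) (Finset.mem_filter.2 ⟨hmem, hm.2⟩)
    omega

lemma card_down (R : Finset (ℤ × ℤ))
    (hc : ∀ i a b : ℤ, (i, a) ∈ R → (i, b) ∈ R → ∀ l, a ≤ l → l ≤ b → (i, l) ∈ R) :
    (R.filter (fun x => (x.1, x.2 - 1) ∉ R)).card = (R.image Prod.fst).card := by
  apply Finset.card_nbij (i := Prod.fst)
  · intro x hx
    rw [Finset.mem_coe, Finset.mem_filter] at hx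
    exact Finset.mem_image_of_mem _ hx.1
  · rintro ⟨x1, x2⟩ hx ⟨y1, y2⟩ hy hxy
    rw [Finset.mem_coe, Finset.mem_filter] at hx hy
    dsimp only at hxy ⊢
    subst hxy
    obtain ⟨hxR, hx1⟩ := hx
    obtain ⟨hyR, hy1⟩ := hy
    dsimp only at hx1 hy1
    rcases lt_trichotomy x2 y2 with h | h | h
    · exact absurd (hc x1 x2 y2 hxR hyR (y2 - 1) (by omega) (by omega)) hy1
    · rw [h]
    · exact absurd (hc x1 y2 x2 hyR hxR (x2 - 1) (by omega) (by omega)) hx1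
  · intro i hi
    rw [Finset.mem_coe, Finset.mem_image] at hi
    obtain ⟨x, hxR, hxi⟩ := hi
    have hne : (R.filter (fun y => y.1 = i)).Nonempty :=
      ⟨x, Finset.mem_filter.2 ⟨hxR, hxi⟩⟩
    obtain ⟨m, hm, hmin⟩ := Finset.exists_min_image _ Prod.snd hne
    rw [Finset.mem_filter] at hm
    refine ⟨m, ?_, hm.2⟩
    rw [Finset.mem_coe, Finset.mem_filter]
    refine ⟨hm.1, fun hmem => ?_⟩
    have : m.2 ≤ m.2 - 1 := hmin (m.1, m.2 - 1) (Finset.mem_filter.2 ⟨hmem, hm.2⟩)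
    omega

lemma perim_convex (R : Finset (ℤ × ℤ)) (h : IsConvexCells (R : Set (ℤ × ℤ))) :
    perim R = 2 * (R.image Prod.snd).card + 2 * (R.image Prod.fst).card := by
  obtain ⟨h1, h2⟩ := h
  simp only [Finset.mem_coe] at h1 h2
  rw [perim_eq, card_right R h1, card_left R h1, card_up R h2, card_down R h2]
  ring

/-- If R is a finite convex set of cells contained in an island R' (a finite
connected convex set), then the perimeter of R, which equals the sum of the
perimeters of the islands composing R, is at most the perimeter of R'. -/
theorem stmt14 (R R' : Finset (ℤ × ℤ)) (hRR' : R ⊆ R')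
    (hR : IsConvexCells (R : Set (ℤ × ℤ)))
    (hR'conv : IsConvexCells (R' : Set (ℤ × ℤ)))
    (hR'conn : IsConnCells (R' : Set (ℤ × ℤ))) :
    perim R ≤ perim R' := by
  rw [perim_convex R hR, perim_convex R' hR'conv]
  have hs := Finset.card_le_card (Finset.image_subset_image (f := Prod.snd) hRR')
  have hf := Finset.card_le_card (Finset.image_subset_image (f := Prod.fst) hRR')
  omega
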